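/- Let M(1) be the Heisenberg vertex algebra on the hyperbolic lattice ℂα ⊕ ℂβ with ⟨α,α⟩ = 1, ⟨β,β⟩ = -1, ⟨α,β⟩ = 0, with Virasoro vector ω = (1/2)α(-1)² - (1/2)β(-1)² + λα(-2) + μβ(-2) and Heisenberg vector I = α(-1) + β(-1). Set c_{L,I} = λ - μ ≠ 0 and c_L = 2 - 12(λ² - μ²), and define w = (I(-1)² + 2c_{L,I}I(-2))·1. Then L(0)w = 2w, L(1)w = 0, and L(2)w = -12c_{L,I}²·1. -/
import Mathlib


/-- A representation of the twisted Heisenberg-Virasoro algebra `HVir` at level zero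
(`C_I` acts by `0`), with the central elements `C_L`, `C_{LI}` acting by the scalars
`cL`, `cLI`. -/
structure HVirRep (V : Type*) [AddCommGroup V] [Module ℂ V] where
  L : ℤ → Module.End ℂ V
  I : ℤ → Module.End ℂ V
  cL : ℂ
  cLI : ℂ
  rel_LL : ∀ n m : ℤ, L n * L m - L m * L n =
    ((n : ℂ) - m) • L (n + m) +
      (if n + m = 0 then (((n : ℂ) ^ 3 - n) / 12) * cL else 0) • (1 : Module.End ℂ V)
  rel_LI : ∀ n m : ℤ, L n * I m - I m * L n =
    (-(m : ℂ)) • I (n + m) -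
      (if n + m = 0 then ((n : ℂ) ^ 2 + n) * cLI else 0) • (1 : Module.End ℂ V)
  rel_II : ∀ n m : ℤ, I n * I m = I m * I n

/-- In the free field realization `M(1)` (abstracted here as a representation of the
twisted Heisenberg-Virasoro algebra with `c_{L,I} = λ - μ ≠ 0`,
`c_L = 2 - 12(λ² - μ²)`, together with a vacuum vector `𝟙` satisfying `L(n)𝟙 = 0` for
`n ≥ -1` and `I(n)𝟙 = 0` for `n ≥ 0`), the vector `w = (I(-1)² + 2c_{L,I} I(-2))𝟙`
satisfies `L(0)w = 2w`, `L(1)w = 0`, and `L(2)w = -12 c_{L,I}² 𝟙`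
(so `w` generates a `W(2,2)`-structure with `c_W = -24 c_{L,I}²`, `L(2)w = (c_W/2)𝟙`). -/
theorem W22_vector_in_free_field {V : Type*} [AddCommGroup V] [Module ℂ V]
    (ρ : HVirRep V) (lam mu : ℂ) (hc : lam - mu ≠ 0)
    (hcLI : ρ.cLI = lam - mu) (hcL : ρ.cL = 2 - 12 * (lam ^ 2 - mu ^ 2))
    (one : V) (hL : ∀ n : ℤ, -1 ≤ n → ρ.L n one = 0)
    (hI : ∀ n : ℤ, 0 ≤ n → ρ.I n one = 0) :
    ρ.L 0 (ρ.I (-1) (ρ.I (-1) one) + (2 * ρ.cLI) • ρ.I (-2) one) =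
        (2 : ℂ) • (ρ.I (-1) (ρ.I (-1) one) + (2 * ρ.cLI) • ρ.I (-2) one) ∧
      ρ.L 1 (ρ.I (-1) (ρ.I (-1) one) + (2 * ρ.cLI) • ρ.I (-2) one) = 0 ∧
      ρ.L 2 (ρ.I (-1) (ρ.I (-1) one) + (2 * ρ.cLI) • ρ.I (-2) one) =
        (-12 * ρ.cLI ^ 2) • one := by
  have comm : ∀ (n m : ℤ) (v : V), ρ.L n (ρ.I m v) =
      ρ.I m (ρ.L n v) + (-(m : ℂ)) • ρ.I (n + m) v -
        (if n + m = 0 then ((n : ℂ) ^ 2 + n) * ρ.cLI else 0) • v := by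
    intro n m v
    have h := congrArg (fun f : Module.End ℂ V => f v) (ρ.rel_LI n m)
    simp only [LinearMap.sub_apply, Module.End.mul_apply, LinearMap.add_apply,
      LinearMap.smul_apply, Module.End.one_apply] at h
    linear_combination (norm := module) h
  have commII : ∀ (n m : ℤ) (v : V), ρ.I n (ρ.I m v) = ρ.I m (ρ.I n v) := by
    intro n m v
    have h := congrArg (fun f : Module.End ℂ V => f v) (ρ.rel_II n m)
    simpa using h
  have hL0 : ρ.L 0 one = 0 := hL 0 (by norm_num)
  have hL1 : ρ.L 1 one = 0 := hL 1 (by norm_num)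
  have hL2 : ρ.L 2 one = 0 := hL 2 (by norm_num)
  have hI0 : ρ.I 0 one = 0 := hI 0 le_rfl
  have hI1 : ρ.I 1 one = 0 := hI 1 (by norm_num)
  -- L0 computations
  have e1 : ρ.L 0 (ρ.I (-1) one) = ρ.I (-1) one := by
    rw [comm]; simp [hL0]
  have e2 : ρ.L 0 (ρ.I (-1) (ρ.I (-1) one)) = (2 : ℂ) • ρ.I (-1) (ρ.I (-1) one) := by
    rw [comm, e1]
    norm_num
    module
  have e3 : ρ.L 0 (ρ.I (-2) one) = (2 : ℂ) • ρ.I (-2) one := by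
    rw [comm]; simp [hL0]
  -- L1 computations
  have f1 : ρ.L 1 (ρ.I (-1) one) = (-2 * ρ.cLI) • one := by
    rw [comm]; simp [hL1, hI0]; module
  have f2 : ρ.L 1 (ρ.I (-1) (ρ.I (-1) one)) = (-4 * ρ.cLI) • ρ.I (-1) one := by
    rw [comm, f1]
    norm_num
    rw [commII 0 (-1), hI0]
    simp only [map_zero, map_smul]
    module
  have f3 : ρ.L 1 (ρ.I (-2) one) = (2 : ℂ) • ρ.I (-1) one := by
    rw [comm]; simp [hL1]
  -- L2 computations
  have g1 : ρ.L 2 (ρ.I (-1) one) = 0 := by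
    rw [comm]; simp [hL2, hI1]
  have g2 : ρ.L 2 (ρ.I (-1) (ρ.I (-1) one)) = 0 := by
    rw [comm, g1]
    norm_num
    rw [commII 1 (-1), hI1]
    simp
  have g3 : ρ.L 2 (ρ.I (-2) one) = (-6 * ρ.cLI) • one := by
    rw [comm]; simp [hL2, hI0]; module
  refine ⟨?_, ?_, ?_⟩
  · rw [map_add, map_smul, e2, e3]; module
  · rw [map_add, map_smul, f2, f3]; module
  · rw [map_add, map_smul, g2, g3]; module
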